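/- For all integers n, m, r: L_{n+r}*L_{m+r} + (-1)^{r+1}*L_n*L_m = 5*F_r*F_{n+m+r}. -/

import Mathlib

def lucas : ℕ → ℕ
  | 0 => 2
  | 1 => 1
  | n + 2 => lucas (n + 1) + lucas n

def fibZ (n : ℤ) : ℤ :=
  if 0 ≤ n then (Nat.fib n.toNat : ℤ) else (-1) ^ (n.natAbs + 1) * (Nat.fib n.natAbs : ℤ)

def lucasZ (n : ℤ) : ℤ :=
  if 0 ≤ n then (lucas n.toNat : ℤ) else (-1) ^ n.natAbs * (lucas n.natAbs : ℤ)

lemma int_two_step (P : ℤ → Prop) (h0 : P 0) (h1 : P 1)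
    (hup : ∀ k : ℤ, P k → P (k + 1) → P (k + 2))
    (hdn : ∀ k : ℤ, P (k + 1) → P (k + 2) → P k) : ∀ k : ℤ, P k := by
  have Q : ∀ k : ℤ, P k ∧ P (k + 1) := by
    intro k
    induction k using Int.induction_on with
    | zero => exact ⟨h0, h1⟩
    | succ i ih =>
        refine ⟨ih.2, ?_⟩
        have h := hup i ih.1 ih.2
        rwa [show ((i : ℤ) + 2) = (i : ℤ) + 1 + 1 by ring] at h
    | pred i ih =>
        refine ⟨?_, ?_⟩
        · have h := hdn (-(i : ℤ) - 1)
            (by rw [show (-(i : ℤ) - 1 + 1) = -(i : ℤ) by ring]; exact ih.1)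
            (by rw [show (-(i : ℤ) - 1 + 2) = -(i : ℤ) + 1 by ring]; exact ih.2)
          exact h
        · rw [show (-(i : ℤ) - 1 + 1) = -(i : ℤ) by ring]; exact ih.1
  exact fun k => (Q k).1

lemma fibZ_rec (k : ℤ) : fibZ (k + 2) = fibZ (k + 1) + fibZ k := by
  rcases k with a | a
  · simp only [fibZ, Int.ofNat_eq_coe]
    rw [if_pos (by positivity), if_pos (by positivity), if_pos (by positivity)]
    have h2 : ((a : ℤ) + 2).toNat = a + 2 := by omega
    have h1 : ((a : ℤ) + 1).toNat = a + 1 := by omega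
    have h0 : ((a : ℤ)).toNat = a := by omega
    rw [h2, h1, h0, Nat.fib_add_two]
    push_cast; ring
  · match a with
    | 0 => decide
    | 1 => decide
    | (b + 2) =>
        have e0 : (Int.negSucc (b + 2)) = -(b : ℤ) - 3 := by
          rw [Int.negSucc_eq]; push_cast; ring
        rw [e0]
        have hA : (-(b:ℤ) - 3 + 2) = -(b:ℤ) - 1 := by ring
        have hB : (-(b:ℤ) - 3 + 1) = -(b:ℤ) - 2 := by ring
        rw [hA, hB]
        simp only [fibZ]
        rw [if_neg (by omega), if_neg (by omega), if_neg (by omega)]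
        have n1 : (-(b:ℤ) - 1).natAbs = b + 1 := by omega
        have n2 : (-(b:ℤ) - 2).natAbs = b + 2 := by omega
        have n3 : (-(b:ℤ) - 3).natAbs = b + 3 := by omega
        rw [n1, n2, n3]
        have hf : Nat.fib (b + 3) = Nat.fib (b + 1) + Nat.fib (b + 2) := Nat.fib_add_two
        rw [hf]
        push_cast
        ring

lemma lucas_fib (k : ℕ) : lucas k + Nat.fib k = 2 * Nat.fib (k + 1) := by
  induction k using Nat.twoStepInduction with
  | zero => decide
  | one => decide
  | more k ih1 ih2 =>
      have hl : lucas (k + 2) = lucas (k + 1) + lucas k := rfl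
      have hf2 : Nat.fib (k + 2) = Nat.fib k + Nat.fib (k + 1) := Nat.fib_add_two
      have hf3 : Nat.fib (k + 3) = Nat.fib (k + 1) + Nat.fib (k + 2) := Nat.fib_add_two
      have ih2' : lucas (k + 1) + Nat.fib (k + 1) = 2 * Nat.fib (k + 2) := ih2
      show lucas (k + 2) + Nat.fib (k + 2) = 2 * Nat.fib (k + 3)
      omega

lemma lucasZ_eq (k : ℤ) : lucasZ k = 2 * fibZ (k + 1) - fibZ k := by
  rcases k with a | a
  · simp only [lucasZ, fibZ, Int.ofNat_eq_coe]
    rw [if_pos (by positivity), if_pos (by positivity), if_pos (by positivity)]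
    have h1 : ((a : ℤ) + 1).toNat = a + 1 := by omega
    have h0 : ((a : ℤ)).toNat = a := by omega
    rw [h1, h0]
    have := lucas_fib a
    push_cast
    omega
  · match a with
    | 0 => decide
    | (b + 1) =>
        have e0 : (Int.negSucc (b + 1)) = -(b : ℤ) - 2 := by
          rw [Int.negSucc_eq]; push_cast; ring
        rw [e0, show (-(b:ℤ) - 2 + 1) = -(b:ℤ) - 1 by ring]
        simp only [lucasZ, fibZ]
        rw [if_neg (by omega), if_neg (by omega), if_neg (by omega)]
        rw [show (-(b:ℤ) - 2).natAbs = b + 2 by omega, show (-(b:ℤ) - 1).natAbs = b + 1 by omega]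
        -- lucas (b+2) = 2 fib (b+1) + fib (b+2) up to signs
        have h1 : lucas (b + 2) + Nat.fib (b + 2) = 2 * Nat.fib (b + 3) := lucas_fib (b + 2)
        have hf2 : Nat.fib (b + 2) = Nat.fib b + Nat.fib (b + 1) := Nat.fib_add_two
        have hf3 : Nat.fib (b + 3) = Nat.fib (b + 1) + Nat.fib (b + 2) := Nat.fib_add_two
        have hl : (lucas (b + 2) : ℤ) = 2 * Nat.fib (b + 1) + Nat.fib (b + 2) := by
          push_cast at h1 ⊢; omega
        rw [hl]
        push_cast
        ring

lemma fibZ_add (a b : ℤ) :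
    fibZ (a + b) = fibZ a * fibZ (b + 1) + (fibZ (a + 1) - fibZ a) * fibZ b := by
  induction a using int_two_step with
  | h0 => norm_num [show fibZ 0 = 0 from rfl, show fibZ 1 = 1 from rfl]
  | h1 =>
      have h2 : fibZ 2 = 1 := rfl
      rw [show (1 : ℤ) + b = b + 1 by ring, show (1 : ℤ) + 1 = 2 by ring, h2,
        show fibZ 1 = 1 from rfl]
      ring
  | hup k ih1 ih2 =>
      have e1 : fibZ (k + 2 + b) = fibZ (k + 1 + b) + fibZ (k + b) := by
        rw [show k + 2 + b = (k + b) + 2 by ring, fibZ_rec, show k + b + 1 = k + 1 + b by ring]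
      have e2 := fibZ_rec k
      have e3 : fibZ (k + 2 + 1) = fibZ (k + 2) + fibZ (k + 1) := by
        rw [show k + 2 + 1 = (k + 1) + 2 by ring, fibZ_rec, show k + 1 + 1 = k + 2 by ring]
      have ih2' : fibZ (k + 1 + b) =
          fibZ (k + 1) * fibZ (b + 1) + (fibZ (k + 2) - fibZ (k + 1)) * fibZ b := by
        rw [show k + 1 + 1 = k + 2 by ring] at ih2; exact ih2
      rw [e1, ih1, ih2', e3, e2]; ring
  | hdn k ih1 ih2 =>
      have e1 : fibZ (k + b) = fibZ (k + 2 + b) - fibZ (k + 1 + b) := by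
        rw [show k + 2 + b = (k + b) + 2 by ring, fibZ_rec, show k + b + 1 = k + 1 + b by ring]
        ring
      have e2 := fibZ_rec k
      have e3 : fibZ (k + 2 + 1) = fibZ (k + 2) + fibZ (k + 1) := by
        rw [show k + 2 + 1 = (k + 1) + 2 by ring, fibZ_rec, show k + 1 + 1 = k + 2 by ring]
      have ih1' : fibZ (k + 1 + b) =
          fibZ (k + 1) * fibZ (b + 1) + (fibZ (k + 2) - fibZ (k + 1)) * fibZ b := by
        rw [show k + 1 + 1 = k + 2 by ring] at ih1; exact ih1
      have ih2' : fibZ (k + 2 + b) = fibZ (k + 2) * fibZ (b + 1) +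
          (fibZ (k + 2) + fibZ (k + 1) - fibZ (k + 2)) * fibZ b := by
        rw [ih2, e3]
      have e1' : fibZ (k + b) = fibZ (k + 2 + b) - fibZ (k + 1 + b) := by
        omega
      rw [e1', ih2', ih1', e2]; ring

lemma sign_eq (r : ℤ) :
    (((-1 : ℤˣ) ^ r : ℤˣ) : ℤ) = fibZ (r + 1) ^ 2 - fibZ r * fibZ (r + 1) - fibZ r ^ 2 := by
  induction r using int_two_step with
  | h0 => norm_num [show fibZ 0 = 0 from rfl, show fibZ 1 = 1 from rfl]
  | h1 =>
      rw [show (1 : ℤ) + 1 = 2 by ring, show fibZ 2 = 1 from rfl, show fibZ 1 = 1 from rfl]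
      norm_num
  | hup k ih1 ih2 =>
      have hu : (((-1 : ℤˣ) ^ (k + 2) : ℤˣ) : ℤ) = (((-1 : ℤˣ) ^ k : ℤˣ) : ℤ) := by
        rw [show k + 2 = k + 2 by ring, zpow_add, zpow_two]
        push_cast; ring
      have e3 : fibZ (k + 2 + 1) = fibZ (k + 2) + fibZ (k + 1) := by
        rw [show k + 2 + 1 = (k + 1) + 2 by ring, fibZ_rec, show k + 1 + 1 = k + 2 by ring]
      have e2 := fibZ_rec k
      rw [hu, ih1, e3, e2]; ring
  | hdn k ih1 ih2 =>
      have hu : (((-1 : ℤˣ) ^ (k + 2) : ℤˣ) : ℤ) = (((-1 : ℤˣ) ^ k : ℤˣ) : ℤ) := by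
        rw [zpow_add, zpow_two]; push_cast; ring
      have e2 := fibZ_rec k
      have e3 : fibZ (k + 2 + 1) = fibZ (k + 2) + fibZ (k + 1) := by
        rw [show k + 2 + 1 = (k + 1) + 2 by ring, fibZ_rec, show k + 1 + 1 = k + 2 by ring]
      rw [← hu, ih2, e3, e2]; ring

theorem stmt5 (n m r : ℤ) :
    lucasZ (n + r) * lucasZ (m + r) + (((-1 : ℤˣ) ^ (r + 1) : ℤˣ) : ℤ) * lucasZ n * lucasZ m =
      5 * fibZ r * fibZ (n + m + r) := by
  have hs : (((-1 : ℤˣ) ^ (r + 1) : ℤˣ) : ℤ) =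
      fibZ r ^ 2 + fibZ r * fibZ (r + 1) - fibZ (r + 1) ^ 2 := by
    rw [zpow_add, zpow_one]
    push_cast
    rw [sign_eq r]
    ring
  have h1 : fibZ (n + r) = fibZ n * fibZ (r + 1) + (fibZ (n + 1) - fibZ n) * fibZ r :=
    fibZ_add n r
  have h2 : fibZ (n + r + 1) =
      fibZ n * fibZ (r + 1 + 1) + (fibZ (n + 1) - fibZ n) * fibZ (r + 1) := by
    rw [show n + r + 1 = n + (r + 1) by ring]; exact fibZ_add n (r + 1)
  have h3 : fibZ (m + r) = fibZ m * fibZ (r + 1) + (fibZ (m + 1) - fibZ m) * fibZ r :=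
    fibZ_add m r
  have h4 : fibZ (m + r + 1) =
      fibZ m * fibZ (r + 1 + 1) + (fibZ (m + 1) - fibZ m) * fibZ (r + 1) := by
    rw [show m + r + 1 = m + (r + 1) by ring]; exact fibZ_add m (r + 1)
  have h6 : fibZ (n + m + r) =
      fibZ n * fibZ (m + r + 1) + (fibZ (n + 1) - fibZ n) * fibZ (m + r) := by
    rw [show n + m + r = n + (m + r) by ring]; exact fibZ_add n (m + r)
  have h7 : fibZ (r + 1 + 1) = fibZ (r + 1) + fibZ r := by
    rw [show r + 1 + 1 = r + 2 by ring, fibZ_rec]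
  rw [hs, lucasZ_eq (n + r), lucasZ_eq (m + r), lucasZ_eq n, lucasZ_eq m,
    h6, h2, h4, h1, h3, h7]
  ring
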